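/- For any p ∈ (0, ∞), a vector x ∈ ℝⁿ satisfies x ∈ {0,1}ⁿ if and only if x ∈ [0,1]ⁿ and ‖x − (1/2)·𝟏ₙ‖ₚᵖ = n/2ᵖ, i.e., ∑ᵢ |xᵢ − 1/2|ᵖ = n/2ᵖ. -/

import Mathlib

theorem lp_box_equivalence (n : ℕ) (p : ℝ) (hp : 0 < p) (x : Fin n → ℝ) :
    (∀ i, x i = 0 ∨ x i = 1) ↔
      ((∀ i, 0 ≤ x i ∧ x i ≤ 1) ∧
        ∑ i, |x i - 1 / 2| ^ p = (n : ℝ) / 2 ^ p) := by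
  have h2 : (0:ℝ) < 2 ^ p := Real.rpow_pos_of_pos (by norm_num) p
  have hhalf : ((1:ℝ)/2) ^ p = 1 / 2 ^ p := by
    rw [one_div, Real.inv_rpow (by norm_num), one_div]
  constructor
  · intro h
    have hbox : ∀ i, 0 ≤ x i ∧ x i ≤ 1 := by
      intro i; rcases h i with h' | h' <;> simp [h']
    refine ⟨hbox, ?_⟩
    have habs : ∀ i, |x i - 1/2| ^ p = (1/2:ℝ) ^ p := by
      intro i; rcases h i with h' | h' <;>
        · rw [h']
          norm_num
    rw [Finset.sum_congr rfl fun i _ => habs i, Finset.sum_const, Finset.card_univ,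
      Fintype.card_fin, nsmul_eq_mul, hhalf]
    ring
  · rintro ⟨hbox, hsum⟩
    have key : ∀ i, |x i - 1/2| ^ p ≤ (1/2:ℝ) ^ p := by
      intro i
      apply Real.rpow_le_rpow (abs_nonneg _) _ hp.le
      rw [abs_le]
      obtain ⟨h1, h2⟩ := hbox i
      constructor <;> linarith
    have heq : ∀ i, |x i - 1/2| ^ p = (1/2:ℝ) ^ p := by
      have hz : ∑ i : Fin n, ((1/2:ℝ) ^ p - |x i - 1/2| ^ p) = 0 := by
        rw [Finset.sum_sub_distrib, hsum, Finset.sum_const, Finset.card_univ,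
          Fintype.card_fin, nsmul_eq_mul, hhalf]
        ring
      intro i
      have := (Finset.sum_eq_zero_iff_of_nonneg (fun j _ => sub_nonneg.mpr (key j))).mp hz
        i (Finset.mem_univ i)
      linarith
    intro i
    have h1 : |x i - 1/2| = 1/2 := by
      have h' := Real.rpow_left_injOn (x := p) (ne_of_gt hp)
      exact h' (by simp [abs_nonneg]) (by norm_num) (heq i)
    rcases (abs_eq (by norm_num : (0:ℝ) ≤ 1/2)).mp h1 with h' | h'
    · right; linarith
    · left; linarith
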